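/- Let (X,Y) be a BLM pair with parameter θ > 0. Then for all s, t > 0, the joint Laplace–Stieltjes transform satisfies E[exp(−sX−tY)] = ( (θ+s)·E[exp(−sX)] + (θ+t)·E[exp(−tY)] − θ ) / (θ+s+t). -/

import Mathlib

set_option maxHeartbeats 1000000


open MeasureTheory Real Set

/-- Marginal survival function `x ↦ P(X > x)`. -/
def survival {Ω : Type*} [MeasurableSpace Ω] (μ : Measure Ω) (X : Ω → ℝ) (x : ℝ) : ℝ :=
  (μ {ω | x < X ω}).toReal

/-- Joint survival function `(x,y) ↦ P(X > x, Y > y)`. -/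
def jointSurvival {Ω : Type*} [MeasurableSpace Ω] (μ : Measure Ω) (X Y : Ω → ℝ) (x y : ℝ) : ℝ :=
  (μ {ω | x < X ω ∧ y < Y ω}).toReal

/-- `(X,Y)` is a BLM pair with parameter `θ > 0`. -/
def IsBLM {Ω : Type*} [MeasurableSpace Ω] (μ : Measure Ω) (X Y : Ω → ℝ) (θ : ℝ) : Prop :=
  0 < θ ∧ μ {ω | 0 < X ω} = 1 ∧ μ {ω | 0 < Y ω} = 1 ∧
  (∀ x y : ℝ, 0 ≤ y → y ≤ x →
    jointSurvival μ X Y x y = Real.exp (-θ * y) * survival μ X (x - y)) ∧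
  (∀ x y : ℝ, 0 ≤ x → x ≤ y →
    jointSurvival μ X Y x y = Real.exp (-θ * x) * survival μ Y (y - x))


noncomputable section
namespace BLMaux
open Filter Function

lemma exp_deriv_aux (c : ℝ) (hc : c ≠ 0) :
    ∀ x ∈ Ici (0:ℝ), HasDerivAt (fun a : ℝ => -exp (-(c*a))/c) (exp (-(c*x))) x := by
  intro x _
  have h1 : HasDerivAt (fun a : ℝ => -(c*a)) (-c) x := by
    simpa using ((hasDerivAt_id x).const_mul c).fun_neg
  have h2 := (h1.exp.div_const c).fun_neg
  have h3 : -(exp (-(c*x)) * -c / c) = exp (-(c*x)) := by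
    field_simp
  rw [h3] at h2
  exact h2.congr_deriv rfl |>.congr_of_eventuallyEq (by filter_upwards with a; rw [neg_div])

lemma exp_tendsto_aux (c : ℝ) (hc : 0 < c) :
    Tendsto (fun a : ℝ => -exp (-(c*a))/c) atTop (nhds 0) := by
  have h1 : Tendsto (fun a : ℝ => c * a) atTop atTop :=
    Tendsto.const_mul_atTop hc tendsto_id
  have h2 : Tendsto (fun a : ℝ => exp (-(c*a))) atTop (nhds 0) :=
    tendsto_exp_neg_atTop_nhds_zero.comp h1
  simpa using (h2.neg).div_const c

lemma expint_integrable (c : ℝ) (hc : 0 < c) (a : ℝ) :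
    MeasureTheory.IntegrableOn (fun x : ℝ => exp (-(c*x))) (Ioi a) := by
  simpa [neg_mul] using exp_neg_integrableOn_Ioi a hc

lemma expint (c : ℝ) (hc : 0 < c) : ∫ x in Ioi (0:ℝ), exp (-(c*x)) = 1/c := by
  have := integral_Ioi_of_hasDerivAt_of_tendsto' (exp_deriv_aux c hc.ne')
    (expint_integrable c hc 0) (exp_tendsto_aux c hc)
  rw [this]; field_simp
  simp

lemma expint_Ioo (c : ℝ) (hc : 0 < c) (b : ℝ) (hb : 0 ≤ b) :
    ∫ y in Ioo (0:ℝ) b, c * exp (-(c*y)) = 1 - exp (-(c*b)) := by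
  rw [← integral_Ioc_eq_integral_Ioo, ← intervalIntegral.integral_of_le hb]
  have : ∀ x ∈ uIcc (0:ℝ) b, HasDerivAt (fun a : ℝ => -exp (-(c*a))) (c * exp (-(c*x))) x := by
    intro x _
    have h1 : HasDerivAt (fun a : ℝ => -(c*a)) (-c) x := by
      simpa using ((hasDerivAt_id x).const_mul c).fun_neg
    exact (h1.exp).fun_neg.congr_deriv (by ring)
  rw [intervalIntegral.integral_eq_sub_of_hasDerivAt this]
  · simp; ring
  · apply Continuous.intervalIntegrable; continuity

variable {Ω : Type*} [MeasurableSpace Ω] (μ : Measure Ω) [IsProbabilityMeasure μ]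

lemma survival_nonneg (Z : Ω → ℝ) (x : ℝ) : 0 ≤ survival μ Z x := ENNReal.toReal_nonneg

lemma survival_le_one (Z : Ω → ℝ) (x : ℝ) : survival μ Z x ≤ 1 := by
  have := ENNReal.toReal_mono (measure_ne_top μ univ) (measure_mono (subset_univ {ω | x < Z ω}))
  simpa [survival] using this

omit [IsProbabilityMeasure μ] in
lemma survival_antitone [MeasureTheory.IsFiniteMeasure μ] (Z : Ω → ℝ) :
    Antitone (survival μ Z) := by
  intro a b hab
  exact ENNReal.toReal_mono (measure_ne_top μ _)
    (measure_mono (fun ω (h : b < Z ω) => lt_of_le_of_lt hab h))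

lemma survival_measurable (Z : Ω → ℝ) : Measurable (survival μ Z) :=
  (survival_antitone μ Z).measurable

lemma lemB (c : ℝ) (hc : 0 < c) (b : ℝ) (hb : 0 ≤ b) :
    ∫ y in Ioi (0:ℝ), c * exp (-(c*y)) * (Iio b).indicator 1 y = 1 - exp (-(c*b)) := by
  have h1 : ∀ y : ℝ, c * exp (-(c*y)) * (Iio b).indicator 1 y
      = (Iio b).indicator (fun y => c * exp (-(c*y))) y := by
    intro y
    by_cases h : y ∈ Iio b <;> simp [h]
  simp_rw [h1]
  rw [setIntegral_indicator measurableSet_Iio]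
  exact expint_Ioo c hc b hb

lemma shift_Ioi (g : ℝ → ℝ) (a : ℝ) :
    ∫ x in Ioi a, g (x - a) = ∫ x in Ioi (0:ℝ), g x := by
  rw [← integral_indicator measurableSet_Ioi, ← integral_indicator measurableSet_Ioi,
    ← integral_sub_right_eq_self (fun x => (Ioi (0:ℝ)).indicator g x) a]
  congr 1
  ext x
  by_cases h : a < x
  · simp [indicator_apply, mem_Ioi, h, sub_pos.mpr h]
  · simp [indicator_apply, mem_Ioi, h, fun hh => h (sub_pos.mp hh)]

omit [IsProbabilityMeasure μ] in
lemma int_bdd [MeasureTheory.IsFiniteMeasure μ]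
    {g : Ω → ℝ} (hg : Measurable g) {C : ℝ} (hb : ∀ ω, |g ω| ≤ C) : Integrable g μ :=
  (integrable_const C).mono' hg.aestronglyMeasurable
    (Eventually.of_forall (fun ω => by rw [Real.norm_eq_abs]; exact hb ω))

lemma swap_aux (Z : Ω → ℝ) (hZ : Measurable Z) (h : Ω → ℝ) (hm : Measurable h)
    (hb : ∀ ω, |h ω| ≤ 1) (c : ℝ) (hc : 0 < c) :
    ∫ ω, h ω * (∫ y in Ioi (0:ℝ), c * exp (-(c*y)) * (Iio (Z ω)).indicator 1 y) ∂μ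
      = ∫ y in Ioi (0:ℝ), c * exp (-(c*y)) * (∫ ω, h ω * ({ω' | y < Z ω'}).indicator 1 ω ∂μ) := by
  set ν := volume.restrict (Ioi (0:ℝ)) with hν
  set f : Ω → ℝ → ℝ := fun ω y => h ω * (c * exp (-(c*y)) * (Iio (Z ω)).indicator 1 y) with hf
  have hset : MeasurableSet {p : Ω × ℝ | p.2 < Z p.1} :=
    measurableSet_lt measurable_snd (hZ.comp measurable_fst)
  have hufm : Measurable (uncurry f) := by
    have : uncurry f = fun p : Ω × ℝ =>
        h p.1 * (c * exp (-(c*p.2)) * ({p : Ω × ℝ | p.2 < Z p.1}).indicator 1 p) := by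
      ext p
      by_cases hp : p.2 < Z p.1 <;>
        simp [uncurry, hf, indicator_apply, hp]
    rw [this]
    exact (hm.comp measurable_fst).mul
      ((((measurable_snd.const_mul c).neg.exp.const_mul c)).mul
        (measurable_one.indicator hset))
  have hgint : Integrable (fun y : ℝ => c * exp (-(c*y))) ν :=
    (expint_integrable c hc 0).const_mul c
  have hbint : Integrable (fun p : Ω × ℝ => c * exp (-(c*p.2))) (μ.prod ν) := by
    have := (integrable_const (1:ℝ) (μ := μ)).mul_prod hgint
    simpa using this
  have hint : Integrable (uncurry f) (μ.prod ν) := by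
    refine hbint.mono' hufm.aestronglyMeasurable (Eventually.of_forall (fun p => ?_))
    rw [Real.norm_eq_abs]
    have h1 : |uncurry f p| = |h p.1| * (c * exp (-(c*p.2)) * |(Iio (Z p.1)).indicator 1 p.2|) := by
      simp [uncurry, hf, abs_mul, abs_of_nonneg (le_of_lt (mul_pos hc (exp_pos _)))]
    rw [h1]
    have h2 : |(Iio (Z p.1)).indicator (1 : ℝ → ℝ) p.2| ≤ 1 := by
      by_cases hp : p.2 ∈ Iio (Z p.1) <;> simp [hp]
    calc |h p.1| * (c * exp (-(c*p.2)) * |(Iio (Z p.1)).indicator 1 p.2|)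
        ≤ 1 * (c * exp (-(c*p.2)) * 1) :=
          mul_le_mul (hb p.1) (mul_le_mul_of_nonneg_left h2 (le_of_lt (mul_pos hc (exp_pos _))))
            (by positivity) zero_le_one
      _ = c * exp (-(c*p.2)) := by ring
  calc ∫ ω, h ω * (∫ y in Ioi (0:ℝ), c * exp (-(c*y)) * (Iio (Z ω)).indicator 1 y) ∂μ
      = ∫ ω, ∫ y, f ω y ∂ν ∂μ := by
        refine integral_congr_ae (Eventually.of_forall (fun ω => ?_))
        exact (integral_const_mul _ _).symm
    _ = ∫ y, ∫ ω, f ω y ∂μ ∂ν := integral_integral_swap hint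
    _ = ∫ y in Ioi (0:ℝ), c * exp (-(c*y)) * (∫ ω, h ω * ({ω' | y < Z ω'}).indicator 1 ω ∂μ) := by
        refine integral_congr_ae (Eventually.of_forall (fun y => ?_))
        have : ∀ ω, f ω y = (c * exp (-(c*y))) * (h ω * ({ω' | y < Z ω'}).indicator 1 ω) := by
          intro ω
          by_cases hp : y < Z ω <;> simp [hf, indicator_apply, hp] <;> ring
        simp_rw [this]
        rw [integral_const_mul]

lemma marginal (Z : Ω → ℝ) (hZ : Measurable Z) (hZ0 : ∀ ω, 0 ≤ Z ω) (c : ℝ) (hc : 0 < c) :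
    ∫ ω, exp (-(c * Z ω)) ∂μ = 1 - c * ∫ x in Ioi (0:ℝ), exp (-(c*x)) * survival μ Z x := by
  have hkey := swap_aux μ Z hZ (fun _ => 1) measurable_const (by intro ω; simp) c hc
  have hL : ∫ ω, (fun _ : Ω => (1:ℝ)) ω *
      (∫ y in Ioi (0:ℝ), c * exp (-(c*y)) * (Iio (Z ω)).indicator 1 y) ∂μ
      = 1 - ∫ ω, exp (-(c * Z ω)) ∂μ := by
    have h1 : ∀ ω, (fun _ : Ω => (1:ℝ)) ω *
        (∫ y in Ioi (0:ℝ), c * exp (-(c*y)) * (Iio (Z ω)).indicator 1 y)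
        = 1 - exp (-(c * Z ω)) := by
      intro ω
      rw [one_mul, lemB c hc (Z ω) (hZ0 ω)]
    rw [integral_congr_ae (Eventually.of_forall h1)]
    have hInt : Integrable (fun ω => exp (-(c * Z ω))) μ := by
      refine int_bdd μ (by measurability) (C := 1) (fun ω => ?_)
      rw [abs_of_pos (exp_pos _)]
      exact exp_le_one_iff.mpr (by nlinarith [hZ0 ω])
    rw [integral_sub (integrable_const 1) hInt]
    simp
  have hR : ∫ y in Ioi (0:ℝ), c * exp (-(c*y)) *
      (∫ ω, (fun _ : Ω => (1:ℝ)) ω * ({ω' | y < Z ω'}).indicator 1 ω ∂μ)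
      = c * ∫ x in Ioi (0:ℝ), exp (-(c*x)) * survival μ Z x := by
    have h2 : ∀ y : ℝ, c * exp (-(c*y)) *
        (∫ ω, (fun _ : Ω => (1:ℝ)) ω * ({ω' | y < Z ω'}).indicator 1 ω ∂μ)
        = c * (exp (-(c*y)) * survival μ Z y) := by
      intro y
      have : ∫ ω, (fun _ : Ω => (1:ℝ)) ω * ({ω' | y < Z ω'}).indicator 1 ω ∂μ
          = survival μ Z y := by
        simp_rw [one_mul]
        rw [integral_indicator_one (measurableSet_lt measurable_const hZ)]
        rfl
      rw [this]; ring
    rw [integral_congr_ae (Eventually.of_forall h2), integral_const_mul]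
  rw [hL, hR] at hkey
  linarith [hkey]

end BLMaux
end


noncomputable section
namespace BLMaux2
open Filter Function MeasureTheory Real Set BLMaux

lemma planeQ (G : ℝ → ℝ) (hGm : Measurable G) (hG0 : ∀ v, 0 ≤ G v) (hG1 : ∀ v, G v ≤ 1)
    (s t θ : ℝ) (hs : 0 < s) (ht : 0 < t) (hθ : 0 < θ) :
    (Integrable (fun y => t * exp (-(t*y)) *
        (∫ x in Ioc (0:ℝ) y, s * exp (-(s*x)) * (exp (-(θ*x)) * G (y - x))))
      (volume.restrict (Ioi (0:ℝ)))) ∧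
    ∫ y in Ioi (0:ℝ), t * exp (-(t*y)) *
        (∫ x in Ioc (0:ℝ) y, s * exp (-(s*x)) * (exp (-(θ*x)) * G (y - x)))
      = s * t * (∫ v in Ioi (0:ℝ), exp (-(t*v)) * G v) / (t + s + θ) := by
  set ν := volume.restrict (Ioi (0:ℝ)) with hν
  set IG := ∫ v in Ioi (0:ℝ), exp (-(t*v)) * G v with hIG
  set Q : ℝ × ℝ → ℝ := fun p => t * exp (-(t*p.1)) *
      ((Ioc (0:ℝ) p.1).indicator (fun x => s * exp (-(s*x)) * (exp (-(θ*x)) * G (p.1 - x))) p.2)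
    with hQ
  -- pointwise identification of the x-marginal of Q
  have hQeq : ∀ y : ℝ, (∫ x, Q (y, x) ∂ν)
      = t * exp (-(t*y)) * (∫ x in Ioc (0:ℝ) y, s * exp (-(s*x)) * (exp (-(θ*x)) * G (y - x))) := by
    intro y
    calc ∫ x, Q (y, x) ∂ν
        = t * exp (-(t*y)) * (∫ x in Ioi (0:ℝ),
            (Ioc (0:ℝ) y).indicator (fun x => s * exp (-(s*x)) * (exp (-(θ*x)) * G (y - x))) x) := by
          rw [hν, ← integral_const_mul]
      _ = t * exp (-(t*y)) * (∫ x in Ioc (0:ℝ) y,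
            s * exp (-(s*x)) * (exp (-(θ*x)) * G (y - x))) := by
          rw [setIntegral_indicator measurableSet_Ioc,
            inter_eq_self_of_subset_right Ioc_subset_Ioi_self]
  -- measurability of Q
  have hQm : Measurable Q := by
    have hset : MeasurableSet {p : ℝ × ℝ | 0 < p.2 ∧ p.2 ≤ p.1} :=
      (measurableSet_lt measurable_const measurable_snd).inter
        (measurableSet_le measurable_snd measurable_fst)
    have heq : Q = fun p : ℝ × ℝ => t * exp (-(t*p.1)) *
        ({p : ℝ × ℝ | 0 < p.2 ∧ p.2 ≤ p.1}).indicator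
          (fun q => s * exp (-(s*q.2)) * (exp (-(θ*q.2)) * G (q.1 - q.2))) p := by
      ext p
      by_cases hp : 0 < p.2 ∧ p.2 ≤ p.1 <;>
        simp [hQ, indicator_apply, mem_Ioc, hp]
    rw [heq]
    have hg : Measurable (fun q : ℝ × ℝ => s * exp (-(s*q.2)) * (exp (-(θ*q.2)) * G (q.1 - q.2))) :=
      ((measurable_snd.const_mul s).neg.exp.const_mul s).mul
        (((measurable_snd.const_mul θ).neg.exp).mul (hGm.comp (measurable_fst.sub measurable_snd)))
    exact ((measurable_fst.const_mul t).neg.exp.const_mul t).mul (hg.indicator hset)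
  -- integrability of Q
  have hdom : Integrable (fun p : ℝ × ℝ => (t * exp (-(t*p.1))) * (s * exp (-(s*p.2)))) (ν.prod ν) :=
    ((expint_integrable t ht 0).const_mul t).mul_prod ((expint_integrable s hs 0).const_mul s)
  have hQb : ∀ p : ℝ × ℝ, ‖Q p‖ ≤ (t * exp (-(t*p.1))) * (s * exp (-(s*p.2))) := by
    intro p
    rw [Real.norm_eq_abs, hQ]
    have h1 : |(Ioc (0:ℝ) p.1).indicator
        (fun x => s * exp (-(s*x)) * (exp (-(θ*x)) * G (p.1 - x))) p.2| ≤ s * exp (-(s*p.2)) := by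
      by_cases hp : p.2 ∈ Ioc (0:ℝ) p.1
      · rw [indicator_of_mem hp]
        have h2 : exp (-(θ*p.2)) ≤ 1 := exp_le_one_iff.mpr (by nlinarith [hp.1])
        have h3 : 0 ≤ exp (-(θ*p.2)) * G (p.1 - p.2) := mul_nonneg (exp_pos _).le (hG0 _)
        have h4 : exp (-(θ*p.2)) * G (p.1 - p.2) ≤ 1 := by nlinarith [hG1 (p.1 - p.2), hG0 (p.1 - p.2), exp_pos (-(θ*p.2))]
        rw [abs_of_nonneg (mul_nonneg (by positivity) h3)]
        nlinarith [mul_pos hs (exp_pos (-(s*p.2)))]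
      · rw [indicator_of_notMem hp, abs_zero]
        positivity
    rw [abs_mul]
    rw [abs_of_nonneg (by positivity : (0:ℝ) ≤ t * exp (-(t*p.1)))]
    exact mul_le_mul_of_nonneg_left h1 (by positivity)
  have hQint : Integrable Q (ν.prod ν) :=
    hdom.mono' hQm.aestronglyMeasurable (Eventually.of_forall hQb)
  -- the y-marginal is integrable
  have hmarg : Integrable (fun y => ∫ x, Q (y, x) ∂ν) ν := hQint.integral_prod_left
  constructor
  · exact hmarg.congr (Eventually.of_forall hQeq)
  -- evaluate the double integral by swapping
  have hswap : ∫ y, ∫ x, Q (y, x) ∂ν ∂ν = ∫ x, ∫ y, Q (y, x) ∂ν ∂ν :=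
    integral_integral_swap (f := fun y x => Q (y, x)) hQint
  -- inner evaluation for x > 0
  have hinner : ∀ x ∈ Ioi (0:ℝ), (∫ y, Q (y, x) ∂ν)
      = (s * t * IG) * exp (-((t+s+θ)*x)) := by
    intro x hx
    have hx0 : (0:ℝ) < x := hx
    have ha : ∀ y : ℝ, Q (y, x) = (Ici x).indicator
        (fun y => t * exp (-(t*y)) * (s * exp (-(s*x)) * (exp (-(θ*x)) * G (y - x)))) y := by
      intro y
      by_cases hxy : x ≤ y <;>
        simp [hQ, indicator_apply, mem_Ioc, mem_Ici, hxy, hx0]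
    calc ∫ y, Q (y, x) ∂ν
        = ∫ y in Ioi (0:ℝ), (Ici x).indicator
            (fun y => t * exp (-(t*y)) * (s * exp (-(s*x)) * (exp (-(θ*x)) * G (y - x)))) y := by
          rw [hν]; exact integral_congr_ae (Eventually.of_forall (fun y => ha y))
      _ = ∫ y in Ici x, t * exp (-(t*y)) * (s * exp (-(s*x)) * (exp (-(θ*x)) * G (y - x))) := by
          rw [setIntegral_indicator measurableSet_Ici,
            inter_eq_self_of_subset_right (Ici_subset_Ioi.mpr hx0)]
      _ = ∫ y in Ioi x, t * exp (-(t*y)) * (s * exp (-(s*x)) * (exp (-(θ*x)) * G (y - x))) :=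
          integral_Ici_eq_integral_Ioi
      _ = ∫ y in Ioi x, (fun v => t * exp (-(t*(v+x))) *
            (s * exp (-(s*x)) * (exp (-(θ*x)) * G v))) (y - x) := by
          refine setIntegral_congr_fun measurableSet_Ioi (fun y _ => ?_)
          simp only [sub_add_cancel]
      _ = ∫ v in Ioi (0:ℝ), t * exp (-(t*(v+x))) * (s * exp (-(s*x)) * (exp (-(θ*x)) * G v)) := by
          exact shift_Ioi (fun v => t * exp (-(t*(v+x))) * (s * exp (-(s*x)) * (exp (-(θ*x)) * G v))) x
      _ = ∫ v in Ioi (0:ℝ), ((s * t * exp (-((t+s+θ)*x)))) * (exp (-(t*v)) * G v) := by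
          refine setIntegral_congr_fun measurableSet_Ioi (fun v _ => ?_)
          rw [show -(t*(v+x)) = -(t*v) + -(t*x) by ring, exp_add,
            show -((t+s+θ)*x) = -(t*x) + (-(s*x) + -(θ*x)) by ring, exp_add, exp_add]
          ring
      _ = (s * t * IG) * exp (-((t+s+θ)*x)) := by
          rw [integral_const_mul, hIG]; ring
  calc ∫ y in Ioi (0:ℝ), t * exp (-(t*y)) *
        (∫ x in Ioc (0:ℝ) y, s * exp (-(s*x)) * (exp (-(θ*x)) * G (y - x)))
      = ∫ y, ∫ x, Q (y, x) ∂ν ∂ν := by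
        rw [hν]; exact (integral_congr_ae (Eventually.of_forall hQeq)).symm
    _ = ∫ x, ∫ y, Q (y, x) ∂ν ∂ν := hswap
    _ = ∫ x in Ioi (0:ℝ), (s * t * IG) * exp (-((t+s+θ)*x)) := by
        rw [hν]; exact setIntegral_congr_fun measurableSet_Ioi (fun x hx => hinner x hx)
    _ = s * t * IG / (t + s + θ) := by
        rw [integral_const_mul, expint (t+s+θ) (by positivity)]
        field_simp

end BLMaux2
end

open BLMaux BLMaux2 Filter in
theorem blm_laplace_stieltjes {Ω : Type*} [MeasurableSpace Ω] (μ : Measure Ω)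
    [IsProbabilityMeasure μ] (X Y : Ω → ℝ) (hX : Measurable X) (hY : Measurable Y)
    (θ : ℝ) (hBLM : IsBLM μ X Y θ) (s t : ℝ) (hs : 0 < s) (ht : 0 < t) :
    ∫ ω, Real.exp (-s * X ω - t * Y ω) ∂μ =
      ((θ + s) * ∫ ω, Real.exp (-s * X ω) ∂μ
        + (θ + t) * ∫ ω, Real.exp (-t * Y ω) ∂μ - θ) / (θ + s + t) := by
  obtain ⟨hθ, hXpos, hYpos, hB1, hB2⟩ := hBLM
  set X' : Ω → ℝ := fun ω => max (X ω) 0 with hX'def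
  set Y' : Ω → ℝ := fun ω => max (Y ω) 0 with hY'def
  have hX' : Measurable X' := hX.max measurable_const
  have hY' : Measurable Y' := hY.max measurable_const
  have hX'0 : ∀ ω, 0 ≤ X' ω := fun ω => le_max_right _ _
  have hY'0 : ∀ ω, 0 ≤ Y' ω := fun ω => le_max_right _ _
  have hcomplX : μ {ω | 0 < X ω}ᶜ = 0 := by
    rw [measure_compl (measurableSet_lt measurable_const hX) (measure_ne_top μ _), hXpos,
      measure_univ]
    simp
  have hcomplY : μ {ω | 0 < Y ω}ᶜ = 0 := by
    rw [measure_compl (measurableSet_lt measurable_const hY) (measure_ne_top μ _), hYpos,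
      measure_univ]
    simp
  have hXae : ∀ᵐ ω ∂μ, X' ω = X ω := by
    rw [ae_iff]
    exact measure_mono_null (fun ω hω h0 => hω (max_eq_left (le_of_lt h0))) hcomplX
  have hYae : ∀ᵐ ω ∂μ, Y' ω = Y ω := by
    rw [ae_iff]
    exact measure_mono_null (fun ω hω h0 => hω (max_eq_left (le_of_lt h0))) hcomplY
  set IF := ∫ x in Ioi (0:ℝ), exp (-(s*x)) * survival μ X x with hIF
  set IG := ∫ v in Ioi (0:ℝ), exp (-(t*v)) * survival μ Y v with hIG
  set a := ∫ ω, exp (-s * X ω) ∂μ with ha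
  set b := ∫ ω, exp (-t * Y ω) ∂μ with hb
  set L := ∫ ω, exp (-s * X ω - t * Y ω) ∂μ with hL
  -- marginal Laplace transforms
  have hsurvX : ∀ x ∈ Ioi (0:ℝ), survival μ X' x = survival μ X x := by
    intro x hx
    have hset : {ω | x < X' ω} = {ω | x < X ω} := by
      ext ω
      simp only [hX'def, mem_setOf_eq, lt_max_iff]
      exact or_iff_left (not_lt.mpr (le_of_lt hx))
    simp only [survival, hset]
  have hsurvY : ∀ y ∈ Ioi (0:ℝ), survival μ Y' y = survival μ Y y := by
    intro y hy
    have hset : {ω | y < Y' ω} = {ω | y < Y ω} := by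
      ext ω
      simp only [hY'def, mem_setOf_eq, lt_max_iff]
      exact or_iff_left (not_lt.mpr (le_of_lt hy))
    simp only [survival, hset]
  have haX : ∫ ω, exp (-(s * X' ω)) ∂μ = a := by
    rw [ha]
    refine integral_congr_ae ?_
    filter_upwards [hXae] with ω h
    rw [h, neg_mul]
  have hbY : ∫ ω, exp (-(t * Y' ω)) ∂μ = b := by
    rw [hb]
    refine integral_congr_ae ?_
    filter_upwards [hYae] with ω h
    rw [h, neg_mul]
  have hmargX : a = 1 - s * IF := by
    rw [← haX, marginal μ X' hX' hX'0 s hs, hIF]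
    congr 2
    exact setIntegral_congr_fun measurableSet_Ioi (fun x hx => by rw [hsurvX x hx])
  have hmargY : b = 1 - t * IG := by
    rw [← hbY, marginal μ Y' hY' hY'0 t ht, hIG]
    congr 2
    exact setIntegral_congr_fun measurableSet_Ioi (fun y hy => by rw [hsurvY y hy])
  -- the joint quantity
  have hbndX : ∀ ω, |1 - exp (-(s * X' ω))| ≤ 1 := by
    intro ω
    rw [abs_le]
    have h1 := exp_pos (-(s * X' ω))
    have h2 : exp (-(s * X' ω)) ≤ 1 := exp_le_one_iff.mpr (by nlinarith [hX'0 ω])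
    constructor <;> nlinarith
  set D : ℝ → ℝ := fun y =>
    ∫ ω, (1 - exp (-(s * X' ω))) * ({ω' | y < Y' ω'}).indicator 1 ω ∂μ with hD
  set A := ∫ ω, (1 - exp (-(s * X' ω))) * (1 - exp (-(t * Y' ω))) ∂μ with hA
  have hA1 : A = ∫ y in Ioi (0:ℝ), t * exp (-(t*y)) * D y := by
    have h0 : ∀ ω, (1 - exp (-(s * X' ω))) * (1 - exp (-(t * Y' ω)))
        = (1 - exp (-(s * X' ω))) *
          (∫ y in Ioi (0:ℝ), t * exp (-(t*y)) * (Iio (Y' ω)).indicator 1 y) := by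
      intro ω
      rw [lemB t ht (Y' ω) (hY'0 ω)]
    rw [hA, integral_congr_ae (Eventually.of_forall h0)]
    exact swap_aux μ Y' hY' _ (measurable_const.sub ((hX'.const_mul s).neg.exp)) hbndX t ht
  have hA2 : ∀ y ∈ Ioi (0:ℝ),
      D y = ∫ x in Ioi (0:ℝ), s * exp (-(s*x)) * jointSurvival μ X Y x y := by
    intro y hy
    have hy0 : (0:ℝ) < y := hy
    have hind : Measurable fun ω => ({ω' | y < Y' ω'}).indicator (1 : Ω → ℝ) ω :=
      measurable_one.indicator (measurableSet_lt measurable_const hY')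
    have hindb : ∀ ω, |({ω' | y < Y' ω'}).indicator (1 : Ω → ℝ) ω| ≤ 1 := by
      intro ω
      by_cases h : ω ∈ {ω' | y < Y' ω'} <;> simp [h]
    have e0 : ∀ ω, (1 - exp (-(s * X' ω))) * ({ω' | y < Y' ω'}).indicator 1 ω
        = ({ω' | y < Y' ω'}).indicator 1 ω *
          (∫ x in Ioi (0:ℝ), s * exp (-(s*x)) * (Iio (X' ω)).indicator 1 x) := by
      intro ω
      rw [lemB s hs (X' ω) (hX'0 ω), mul_comm]
    have e1 : D y = ∫ ω, ({ω' | y < Y' ω'}).indicator 1 ω *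
        (∫ x in Ioi (0:ℝ), s * exp (-(s*x)) * (Iio (X' ω)).indicator 1 x) ∂μ := by
      rw [hD]
      exact integral_congr_ae (Eventually.of_forall e0)
    rw [e1, swap_aux μ X' hX' _ hind hindb s hs]
    refine setIntegral_congr_fun measurableSet_Ioi (fun x hx => ?_)
    congr 1
    have h2 : ∀ ω, ({ω' | y < Y' ω'}).indicator (1 : Ω → ℝ) ω *
        ({ω' | x < X' ω'}).indicator 1 ω
        = ({ω' | x < X ω' ∧ y < Y ω'}).indicator (1 : Ω → ℝ) ω := by
      intro ω
      have hxe : x < X' ω ↔ x < X ω := by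
        simp only [hX'def, lt_max_iff]
        exact or_iff_left (not_lt.mpr (le_of_lt hx))
      have hye : y < Y' ω ↔ y < Y ω := by
        simp only [hY'def, lt_max_iff]
        exact or_iff_left (not_lt.mpr (le_of_lt hy0))
      by_cases h1 : x < X ω <;> by_cases h2 : y < Y ω <;>
        simp [indicator_apply, hxe, hye, h1, h2]
    rw [integral_congr_ae (Eventually.of_forall h2), integral_indicator_one
      (show MeasurableSet {ω' | x < X ω' ∧ y < Y ω'} from
        (measurableSet_lt measurable_const hX).inter (measurableSet_lt measurable_const hY))]
    rfl
  have hA3 : ∀ y ∈ Ioi (0:ℝ),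
      (∫ x in Ioi (0:ℝ), s * exp (-(s*x)) * jointSurvival μ X Y x y)
      = (∫ x in Ioc (0:ℝ) y, s * exp (-(s*x)) * (exp (-(θ*x)) * survival μ Y (y - x)))
        + s * exp (-(s*y)) * exp (-(θ*y)) * IF := by
    intro y hy
    have hy0 : (0:ℝ) < y := hy
    have hjm : Measurable (fun x => jointSurvival μ X Y x y) := by
      have hanti : Antitone (fun x => jointSurvival μ X Y x y) := by
        intro u v huv
        exact ENNReal.toReal_mono (measure_ne_top μ _)
          (measure_mono (fun ω h => ⟨lt_of_le_of_lt huv h.1, h.2⟩))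
      exact hanti.measurable
    have hint : IntegrableOn (fun x => s * exp (-(s*x)) * jointSurvival μ X Y x y) (Ioi 0) := by
      refine ((expint_integrable s hs 0).const_mul s).mono'
        (((((measurable_id.const_mul s).neg.exp.const_mul s)).mul hjm).aestronglyMeasurable)
        (Eventually.of_forall (fun x => ?_))
      rw [Real.norm_eq_abs, abs_mul, abs_of_pos (mul_pos hs (exp_pos _))]
      have h0 : (0:ℝ) ≤ jointSurvival μ X Y x y := ENNReal.toReal_nonneg
      have h1 : jointSurvival μ X Y x y ≤ 1 := by
        have := ENNReal.toReal_mono (measure_ne_top μ univ)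
          (measure_mono (subset_univ {ω | x < X ω ∧ y < Y ω}))
        simpa [jointSurvival] using this
      rw [abs_of_nonneg h0]
      nlinarith [mul_pos hs (exp_pos (-(s*x)))]
    rw [← Ioc_union_Ioi_eq_Ioi (le_of_lt hy0),
      setIntegral_union Ioc_disjoint_Ioi_same measurableSet_Ioi
        (hint.mono_set Ioc_subset_Ioi_self) (hint.mono_set (Ioi_subset_Ioi (le_of_lt hy0)))]
    congr 1
    · refine setIntegral_congr_fun measurableSet_Ioc (fun x hx => ?_)
      rw [hB2 x y (le_of_lt hx.1) hx.2, neg_mul]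
    · calc ∫ x in Ioi y, s * exp (-(s*x)) * jointSurvival μ X Y x y
          = ∫ x in Ioi y, (fun u => s * exp (-(s*(u+y))) *
              (exp (-(θ*y)) * survival μ X u)) (x - y) := by
            refine setIntegral_congr_fun measurableSet_Ioi (fun x hx => ?_)
            rw [hB1 x y (le_of_lt hy0) (le_of_lt hx)]
            simp only [neg_mul, sub_add_cancel]
        _ = ∫ u in Ioi (0:ℝ), s * exp (-(s*(u+y))) * (exp (-(θ*y)) * survival μ X u) := by
            exact shift_Ioi (fun u => s * exp (-(s*(u+y))) * (exp (-(θ*y)) * survival μ X u)) y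
        _ = ∫ u in Ioi (0:ℝ), (s * exp (-(s*y)) * exp (-(θ*y))) *
              (exp (-(s*u)) * survival μ X u) := by
            refine setIntegral_congr_fun measurableSet_Ioi (fun u _ => ?_)
            rw [show -(s*(u+y)) = -(s*u) + -(s*y) by ring, exp_add]
            ring
        _ = s * exp (-(s*y)) * exp (-(θ*y)) * IF := by
            rw [integral_const_mul, hIF]
  obtain ⟨hPint, hPval⟩ := planeQ (survival μ Y) (survival_measurable μ Y)
    (survival_nonneg μ Y) (survival_le_one μ Y) s t θ hs ht hθ
  have hAval : A = (s*t*IF + s*t*IG) / (t+s+θ) := by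
    rw [hA1]
    have hcong : EqOn (fun y => t * exp (-(t*y)) * D y)
        (fun y => t * exp (-(t*y)) *
            (∫ x in Ioc (0:ℝ) y, s * exp (-(s*x)) * (exp (-(θ*x)) * survival μ Y (y - x)))
          + (t*(s*IF)) * exp (-((t+s+θ)*y))) (Ioi (0:ℝ)) := by
      intro y hy
      simp only
      rw [hA2 y hy, hA3 y hy, mul_add]
      congr 1
      rw [show -((t+s+θ)*y) = -(t*y) + (-(s*y) + -(θ*y)) by ring, exp_add, exp_add]
      ring
    rw [setIntegral_congr_fun measurableSet_Ioi hcong,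
      integral_add hPint ((expint_integrable (t+s+θ) (by positivity) 0).const_mul (t*(s*IF))),
      hPval, integral_const_mul, expint (t+s+θ) (by positivity)]
    field_simp
    ring
  -- expand A
  have haInt : Integrable (fun ω => exp (-(s * X' ω))) μ := by
    refine int_bdd μ ((hX'.const_mul s).neg.exp) (C := 1) (fun ω => ?_)
    rw [abs_of_pos (exp_pos _)]
    exact exp_le_one_iff.mpr (by nlinarith [hX'0 ω])
  have hbInt : Integrable (fun ω => exp (-(t * Y' ω))) μ := by
    refine int_bdd μ ((hY'.const_mul t).neg.exp) (C := 1) (fun ω => ?_)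
    rw [abs_of_pos (exp_pos _)]
    exact exp_le_one_iff.mpr (by nlinarith [hY'0 ω])
  have habInt : Integrable (fun ω => exp (-(s * X' ω)) * exp (-(t * Y' ω))) μ := by
    refine int_bdd μ (((hX'.const_mul s).neg.exp).mul ((hY'.const_mul t).neg.exp)) (C := 1)
      (fun ω => ?_)
    have h1 : exp (-(s * X' ω)) ≤ 1 := exp_le_one_iff.mpr (by nlinarith [hX'0 ω])
    have h2 : exp (-(t * Y' ω)) ≤ 1 := exp_le_one_iff.mpr (by nlinarith [hY'0 ω])
    rw [abs_of_pos (mul_pos (exp_pos _) (exp_pos _))]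
    nlinarith [exp_pos (-(s * X' ω)), exp_pos (-(t * Y' ω))]
  have hexpand : A = 1 - a - b + L := by
    have h0 : ∀ ω, (1 - exp (-(s * X' ω))) * (1 - exp (-(t * Y' ω)))
        = 1 - exp (-(s * X' ω)) - exp (-(t * Y' ω))
          + exp (-(s * X' ω)) * exp (-(t * Y' ω)) := fun ω => by ring
    have hLeq : ∫ ω, exp (-(s * X' ω)) * exp (-(t * Y' ω)) ∂μ = L := by
      rw [hL]
      refine integral_congr_ae ?_
      filter_upwards [hXae, hYae] with ω h1 h2
      rw [h1, h2, ← exp_add]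
      ring_nf
    have h12 : Integrable (fun ω => 1 - exp (-(s * X' ω))) μ := by
      exact (integrable_const 1).sub haInt
    have h13 : Integrable (fun ω => 1 - exp (-(s * X' ω)) - exp (-(t * Y' ω))) μ := by
      exact h12.sub hbInt
    rw [hA, integral_congr_ae (Eventually.of_forall h0),
      integral_add h13 habInt, integral_sub h12 hbInt,
      integral_sub (integrable_const 1) haInt, haX, hbY, hLeq]
    simp
  -- final algebra
  have h3 : s*t*IF = t*(1-a) := by
    rw [show s*t*IF = t*(s*IF) by ring]
    rw [show s*IF = 1 - a by linarith [hmargX]]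
  have h4 : s*t*IG = s*(1-b) := by
    rw [show s*t*IG = s*(t*IG) by ring]
    rw [show t*IG = 1 - b by linarith [hmargY]]
  have hkey : 1 - a - b + L = (t*(1-a) + s*(1-b))/(t+s+θ) := by
    rw [← h3, ← h4, ← hAval, hexpand]
  have hden : (t+s+θ) ≠ 0 := by positivity
  have hden2 : (θ+s+t) ≠ 0 := by positivity
  have hgoal : L = ((θ + s) * a + (θ + t) * b - θ) / (θ + s + t) := by
    rw [eq_div_iff hden2]
    rw [eq_div_iff hden] at hkey
    nlinarith [hkey]
  exact hgoal
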